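/- Assume 1 < c_A ≤ c_B, c_A < A, and (A+1)/2 ≤ c. Fix j* ∈ T_A and let G* be the graph on V in which T_A induces a complete graph and every node of T_B is adjacent to j* and to no other node. Then G* minimizes the social cost among all connected graphs on V: for every connected graph G on V, S(G*) ≤ S(G). In particular (since G* is pairwise stable) the price of stability is 1. -/

import Mathlib

open SimpleGraph Classical
open scoped ENNReal

noncomputable section

variable {V : Type*} [Fintype V] [DecidableEq V]

/-- The degree of node `i` in `G`. -/
def degE (G : SimpleGraph V) (i : V) : ℕ := (G.neighborSet i).ncard

/-- The hop distance between `i` and `j`, with value `+∞` for unreachable pairs. -/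
def dE (G : SimpleGraph V) (i j : V) : ℝ≥0∞ :=
  if G.Reachable i j then (G.dist i j : ℝ≥0∞) else ⊤

/-- Basic model: the cost of node `i`, where a node of type A (in `TA`) pays link
cost `cA`, a node of type B (not in `TA`) pays `cB`, distances to type-A nodes are
weighted by `A` and to type-B nodes by `1`. -/
def cost (TA : Finset V) (A cA cB : ℝ) (G : SimpleGraph V) (i : V) : ℝ≥0∞ :=
  (degE G i : ℝ≥0∞) * ENNReal.ofReal (if i ∈ TA then cA else cB)
    + ENNReal.ofReal A * ∑ j ∈ TA, dE G i j
    + ∑ j ∈ TAᶜ, dE G i j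

/-- `G` with the edge `ij` removed. -/
def delE (G : SimpleGraph V) (i j : V) : SimpleGraph V := G.deleteEdges {s(i, j)}

/-- `G` with the edge `ij` added. -/
def addE (G : SimpleGraph V) (i j : V) : SimpleGraph V := G ⊔ edge i j

/-- Pairwise stability: removing any present edge strictly increases the cost of both
endpoints, and adding any absent edge strictly increases the cost of at least one
endpoint. -/
def PairwiseStable (TA : Finset V) (A cA cB : ℝ) (G : SimpleGraph V) : Prop :=
  (∀ i j : V, G.Adj i j →
    cost TA A cA cB G i < cost TA A cA cB (delE G i j) i ∧
    cost TA A cA cB G j < cost TA A cA cB (delE G i j) j) ∧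
  (∀ i j : V, i ≠ j → ¬ G.Adj i j →
    cost TA A cA cB G i < cost TA A cA cB (addE G i j) i ∨
    cost TA A cA cB G j < cost TA A cA cB (addE G i j) j)

/-- The social cost: the sum of the individual costs. -/
def socialCost (TA : Finset V) (A cA cB : ℝ) (G : SimpleGraph V) : ℝ≥0∞ :=
  ∑ i, cost TA A cA cB G i

/-- The graph in which `T_A` induces a complete graph and every node of `T_B` is
adjacent to `jstar ∈ T_A` and to no other node. -/
def Gstar (TA : Finset V) (jstar : V) : SimpleGraph V :=
  SimpleGraph.fromRel (fun i j => (i ∈ TA ∧ j ∈ TA) ∨ (i ∉ TA ∧ j = jstar))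

/-- The graph in which `T_A` induces a complete graph, every node of `T_B` is adjacent
to every node of `T_A`, and no two nodes of `T_B` are adjacent. -/
def Gss (TA : Finset V) : SimpleGraph V :=
  SimpleGraph.fromRel (fun i j => i ∈ TA ∨ j ∈ TA)

set_option linter.unusedSectionVars false

lemma dE_eq_edist (G : SimpleGraph V) (i j : V) : dE G i j = (G.edist i j : ℝ≥0∞) := by
  unfold dE
  by_cases h : G.Reachable i j
  · have h1 : G.edist i j ≠ ⊤ := edist_ne_top_iff_reachable.mpr h
    rw [if_pos h, show G.dist i j = (G.edist i j).toNat from rfl,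
      ← ENat.toENNReal_coe, ENat.coe_toNat h1]
  · rw [if_neg h, edist_eq_top_of_not_reachable h]; rfl

lemma dE_self (G : SimpleGraph V) (i : V) : dE G i i = 0 := by
  rw [dE_eq_edist]; simp

lemma dE_comm (G : SimpleGraph V) (i j : V) : dE G i j = dE G j i := by
  rw [dE_eq_edist, dE_eq_edist, edist_comm]

lemma dE_adj {G : SimpleGraph V} {i j : V} (h : G.Adj i j) : dE G i j = 1 := by
  rw [dE_eq_edist, edist_eq_one_iff_adj.mpr h, ENat.toENNReal_one]

lemma one_le_dE (G : SimpleGraph V) {i j : V} (h : i ≠ j) : 1 ≤ dE G i j := by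
  rw [dE_eq_edist, ← ENat.toENNReal_one, ENat.toENNReal_le]
  exact Order.one_le_iff_pos.mpr (edist_pos_of_ne h)

lemma two_le_dE (G : SimpleGraph V) {i j : V} (hne : i ≠ j) (hnadj : ¬ G.Adj i j) :
    2 ≤ dE G i j := by
  rw [dE_eq_edist, ← ENat.toENNReal_ofNat 2, ENat.toENNReal_le]
  rcases eq_or_ne (G.edist i j) ⊤ with h | h
  · rw [h]; exact le_top
  · have h0 : G.edist i j ≠ 0 := (edist_pos_of_ne hne).ne'
    have h1 : G.edist i j ≠ 1 := fun hh => hnadj (edist_eq_one_iff_adj.mp hh)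
    lift G.edist i j to ℕ using h with n hn
    have : 2 ≤ n := by
      rcases n with _ | _ | n
      · simp at h0
      · simp at h1
      · omega
    simpa using (Nat.cast_le (α := ℕ∞)).mpr this

lemma dE_le_two {G : SimpleGraph V} {i j k : V} (h1 : G.Adj i k) (h2 : G.Adj k j) :
    dE G i j ≤ 2 := by
  rw [dE_eq_edist]
  have := edist_le (Walk.cons h1 h2.toWalk)
  simp only [Walk.length_cons, Walk.length_nil] at this
  calc (G.edist i j : ℝ≥0∞) ≤ ((0+1+1 : ℕ) : ℕ∞) := by exact_mod_cast ENat.toENNReal_le.mpr this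
  _ = 2 := by norm_num

lemma dE_triangle (G : SimpleGraph V) (i k j : V) : dE G i j ≤ dE G i k + dE G k j := by
  rw [dE_eq_edist, dE_eq_edist, dE_eq_edist, ← ENat.toENNReal_add, ENat.toENNReal_le]
  exact SimpleGraph.edist_triangle

lemma dE_anti {G H : SimpleGraph V} (h : H ≤ G) (i j : V) : dE G i j ≤ dE H i j := by
  rw [dE_eq_edist, dE_eq_edist, ENat.toENNReal_le]
  exact edist_anti h

lemma dE_top {G : SimpleGraph V} {i j : V} (h : ¬ G.Reachable i j) : dE G i j = ⊤ :=
  if_neg h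

def wE (TA : Finset V) (A : ℝ) (j : V) : ℝ≥0∞ := if j ∈ TA then ENNReal.ofReal A else 1

def ocE (TA : Finset V) (cA cB : ℝ) (i : V) : ℝ≥0∞ :=
  ENNReal.ofReal (if i ∈ TA then cA else cB)

def FE (TA : Finset V) (A cA cB : ℝ) (G : SimpleGraph V) (i j : V) : ℝ≥0∞ :=
  (if G.Adj i j then ocE TA cA cB i else 0) + wE TA A j * dE G i j

lemma degE_eq_card (G : SimpleGraph V) (i : V) :
    degE G i = (Finset.univ.filter (fun j => G.Adj i j)).card := by
  rw [degE, show G.neighborSet i = ↑(Finset.univ.filter (fun j => G.Adj i j)) by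
    ext x; simp [SimpleGraph.neighborSet], Set.ncard_coe_finset]

lemma cost_eq_sum_FE (TA : Finset V) (A cA cB : ℝ) (G : SimpleGraph V) (i : V) :
    cost TA A cA cB G i = ∑ j, FE TA A cA cB G i j := by
  unfold cost FE
  rw [Finset.sum_add_distrib]
  have h1 : ∑ j : V, (if G.Adj i j then ocE TA cA cB i else 0)
      = (degE G i : ℝ≥0∞) * ENNReal.ofReal (if i ∈ TA then cA else cB) := by
    rw [← Finset.sum_filter, Finset.sum_const, degE_eq_card, nsmul_eq_mul, ocE]
  have h2 : ∑ j : V, wE TA A j * dE G i j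
      = ENNReal.ofReal A * ∑ j ∈ TA, dE G i j + ∑ j ∈ TAᶜ, dE G i j := by
    rw [← Finset.sum_add_sum_compl TA (fun j => wE TA A j * dE G i j)]
    congr 1
    · rw [Finset.mul_sum]
      exact Finset.sum_congr rfl (fun j hj => by rw [wE, if_pos hj])
    · exact Finset.sum_congr rfl (fun j hj => by
        rw [wE, if_neg (Finset.mem_compl.mp hj), one_mul])
  rw [h1, h2, add_assoc]

lemma FE_self (TA : Finset V) (A cA cB : ℝ) (G : SimpleGraph V) (i : V) :
    FE TA A cA cB G i i = 0 := by
  simp [FE, dE_self]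

lemma social_eq_offDiag (TA : Finset V) (A cA cB : ℝ) (G : SimpleGraph V) :
    socialCost TA A cA cB G = ∑ p ∈ Finset.univ.offDiag, FE TA A cA cB G p.1 p.2 := by
  rw [socialCost]
  simp_rw [cost_eq_sum_FE]
  rw [← Finset.sum_product', ← Finset.diag_union_offDiag,
    Finset.sum_union (Finset.disjoint_diag_offDiag _)]
  have : ∑ p ∈ Finset.univ.diag, FE TA A cA cB G p.1 p.2 = 0 := by
    apply Finset.sum_eq_zero
    intro p hp
    obtain ⟨-, h2⟩ := Finset.mem_diag.mp hp
    rw [← h2, FE_self]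
  rw [this, zero_add]

lemma sum_offDiag_swap (f : V → V → ℝ≥0∞) :
    ∑ p ∈ Finset.univ.offDiag, f p.1 p.2 = ∑ p ∈ Finset.univ.offDiag, f p.2 p.1 := by
  apply Finset.sum_nbij' (fun p => (p.2, p.1)) (fun p => (p.2, p.1)) <;>
    simp [Finset.mem_offDiag, ne_comm]

lemma sum_offDiag_pair (f : V → V → ℝ≥0∞) :
    ∑ p ∈ Finset.univ.offDiag, (f p.1 p.2 + f p.2 p.1)
      = 2 * ∑ p ∈ Finset.univ.offDiag, f p.1 p.2 := by
  rw [Finset.sum_add_distrib, ← sum_offDiag_swap f, two_mul]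

def kapE (TA : Finset V) (φ : V → V) (i j : V) : ℝ≥0∞ :=
  (if i ∉ TA ∧ φ i = j then 1 else 0) + (if j ∉ TA ∧ φ j = i then 1 else 0)

lemma kapE_comm (TA : Finset V) (φ : V → V) (i j : V) :
    kapE TA φ i j = kapE TA φ j i := add_comm _ _

lemma sum_offDiag_kap (TA : Finset V) (φ : V → V) (hφ : ∀ b, b ∉ TA → φ b ≠ b) :
    ∑ p ∈ Finset.univ.offDiag, kapE TA φ p.1 p.2 = 2 * (TAᶜ.card : ℝ≥0∞) := by
  have hg : ∑ p ∈ Finset.univ.offDiag,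
      (if p.1 ∉ TA ∧ φ p.1 = p.2 then (1:ℝ≥0∞) else 0) = (TAᶜ.card : ℝ≥0∞) := by
    have hdiag : ∑ p ∈ Finset.univ.diag,
        (if p.1 ∉ TA ∧ φ p.1 = p.2 then (1:ℝ≥0∞) else 0) = 0 := by
      apply Finset.sum_eq_zero
      intro p hp
      obtain ⟨-, h2⟩ := Finset.mem_diag.mp hp
      rw [if_neg]
      rintro ⟨h3, h4⟩
      exact hφ p.1 h3 (h4.trans h2.symm)
    have := (Finset.sum_union (f := fun p : V × V =>
        (if p.1 ∉ TA ∧ φ p.1 = p.2 then (1:ℝ≥0∞) else 0))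
        (Finset.disjoint_diag_offDiag (Finset.univ : Finset V)))
    rw [Finset.diag_union_offDiag, hdiag, zero_add] at this
    rw [← this, Finset.sum_product]
    show ∑ i : V, ∑ j : V, (if i ∉ TA ∧ φ i = j then (1:ℝ≥0∞) else 0) = _
    have : ∀ i : V, (∑ j : V, if i ∉ TA ∧ φ i = j then (1:ℝ≥0∞) else 0)
        = if i ∉ TA then 1 else 0 := by
      intro i
      by_cases hi : i ∈ TA
      · simp [hi]
      · simp only [hi, not_false_iff, true_and, if_true]
        rw [Finset.sum_ite_eq]
        simp
    rw [Finset.sum_congr rfl (fun i _ => this i), Finset.sum_boole]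
    norm_cast
    congr 1
    ext x
    simp
  calc ∑ p ∈ Finset.univ.offDiag, kapE TA φ p.1 p.2
      = 2 * ∑ p ∈ Finset.univ.offDiag,
          (if p.1 ∉ TA ∧ φ p.1 = p.2 then (1:ℝ≥0∞) else 0) :=
        sum_offDiag_pair (fun i j => if i ∉ TA ∧ φ i = j then (1:ℝ≥0∞) else 0)
    _ = 2 * (TAᶜ.card : ℝ≥0∞) := by rw [hg]

section GstarLemmas

variable {TA : Finset V} {jstar : V} (hjstar : jstar ∈ TA)

lemma Gstar_adj_iff (i j : V) : (Gstar TA jstar).Adj i j ↔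
    i ≠ j ∧ ((i ∈ TA ∧ j ∈ TA) ∨ (i ∉ TA ∧ j = jstar) ∨ (j ∉ TA ∧ i = jstar)) := by
  simp only [Gstar, SimpleGraph.fromRel_adj]
  tauto

lemma Gstar_adj_AA {i j : V} (hi : i ∈ TA) (hj : j ∈ TA) (hne : i ≠ j) :
    (Gstar TA jstar).Adj i j :=
  (Gstar_adj_iff i j).mpr ⟨hne, Or.inl ⟨hi, hj⟩⟩

include hjstar

lemma Gstar_adj_jB {j : V} (hj : j ∉ TA) : (Gstar TA jstar).Adj jstar j :=
  (Gstar_adj_iff jstar j).mpr ⟨fun h => hj (h ▸ hjstar), Or.inr (Or.inr ⟨hj, rfl⟩)⟩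

omit hjstar in
lemma Gstar_nadj_mixed {i j : V} (hi : i ∈ TA) (hine : i ≠ jstar) (hj : j ∉ TA) :
    ¬ (Gstar TA jstar).Adj i j := by
  rw [Gstar_adj_iff]
  rintro ⟨-, (⟨-, h⟩ | ⟨h, -⟩ | ⟨-, h⟩)⟩
  · exact hj h
  · exact h hi
  · exact hine h

lemma Gstar_nadj_BB {i j : V} (hi : i ∉ TA) (hj : j ∉ TA) :
    ¬ (Gstar TA jstar).Adj i j := by
  rw [Gstar_adj_iff]
  rintro ⟨-, (⟨h, -⟩ | ⟨-, h⟩ | ⟨-, h⟩)⟩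
  · exact hi h
  · exact hj (h ▸ hjstar)
  · exact hi (h ▸ hjstar)

lemma Gstar_adj_B {b y : V} (hb : b ∉ TA) (h : (Gstar TA jstar).Adj b y) : y = jstar := by
  rw [Gstar_adj_iff] at h
  rcases h with ⟨-, (⟨h, -⟩ | ⟨-, h⟩ | ⟨hy, h⟩)⟩
  · exact absurd h hb
  · exact h
  · exact absurd (h ▸ hjstar) hb

lemma Gstar_adj_jstar {x : V} (hx : x ≠ jstar) : (Gstar TA jstar).Adj x jstar := by
  by_cases hxA : x ∈ TA
  · exact Gstar_adj_AA hxA hjstar hx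
  · exact (Gstar_adj_iff x jstar).mpr ⟨hx, Or.inr (Or.inl ⟨hxA, rfl⟩)⟩

lemma Gstar_dE_le_one_jstar (x : V) : dE (Gstar TA jstar) x jstar ≤ 1 := by
  by_cases hx : x = jstar
  · rw [hx, dE_self]; exact zero_le_one
  · rw [dE_adj (Gstar_adj_jstar hjstar hx)]

lemma Gstar_dE_le_two (x y : V) : dE (Gstar TA jstar) x y ≤ 2 := by
  calc dE (Gstar TA jstar) x y
      ≤ dE (Gstar TA jstar) x jstar + dE (Gstar TA jstar) jstar y := dE_triangle _ _ _ _
    _ ≤ 1 + 1 := add_le_add (Gstar_dE_le_one_jstar hjstar x)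
        (by rw [dE_comm]; exact Gstar_dE_le_one_jstar hjstar y)
    _ = 2 := one_add_one_eq_two

lemma Gstar_dE_ne_top (x y : V) : dE (Gstar TA jstar) x y ≠ ⊤ :=
  fun h => by simpa [h] using Gstar_dE_le_two hjstar x y

end GstarLemmas

def LB (TA : Finset V) (A cA cB : ℝ) (i j : V) : ℝ≥0∞ :=
  wE TA A i + wE TA A j
    + min (ocE TA cA cB i + ocE TA cA cB j) (wE TA A i + wE TA A j)

lemma LB_comm (TA : Finset V) (A cA cB : ℝ) (i j : V) :
    LB TA A cA cB i j = LB TA A cA cB j i := by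
  rw [LB, LB, add_comm (wE TA A i), add_comm (ocE TA cA cB i)]

section Pair

variable {TA : Finset V} {A cA cB : ℝ}
  (hA : 1 < A) (hcA : 1 < cA) (hAB : cA ≤ cB) (hcAA : cA < A)
  (hkey : A + 1 ≤ cA + cB)

include hA hcA hAB hcAA hkey

lemma pair_lower (G : SimpleGraph V) (φ : V → V) (hφ : ∀ b ∉ TA, G.Adj b (φ b))
    {i j : V} (hij : i ≠ j) :
    LB TA A cA cB i j + ENNReal.ofReal (cA + cB - A - 1) * kapE TA φ i j
      ≤ FE TA A cA cB G i j + FE TA A cA cB G j i := by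
  have hA0 : (0:ℝ) ≤ A := by linarith
  have hcA0 : (0:ℝ) ≤ cA := by linarith
  have hcB0 : (0:ℝ) ≤ cB := by linarith
  have hd0 : (0:ℝ) ≤ cA + cB - A - 1 := by linarith
  by_cases hadj : G.Adj i j
  · rw [FE, FE, if_pos hadj, if_pos hadj.symm, dE_adj hadj, dE_adj hadj.symm,
      mul_one, mul_one,
      show ocE TA cA cB i + wE TA A j + (ocE TA cA cB j + wE TA A i)
        = wE TA A i + wE TA A j + (ocE TA cA cB i + ocE TA cA cB j) by ring,
      LB, add_assoc]
    apply add_le_add_right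
    by_cases hi : i ∈ TA <;> by_cases hj : j ∈ TA
    · have : kapE TA φ i j = 0 := by simp [kapE, hi, hj]
      rw [this, mul_zero, add_zero]
      exact min_le_left _ _
    · have hoc : ocE TA cA cB i + ocE TA cA cB j = ENNReal.ofReal (cA + cB) := by
        rw [ocE, ocE, if_pos hi, if_neg hj, ← ENNReal.ofReal_add hcA0 hcB0]
      have hw : wE TA A i + wE TA A j = ENNReal.ofReal (A + 1) := by
        rw [wE, wE, if_pos hi, if_neg hj, ← ENNReal.ofReal_one,
          ← ENNReal.ofReal_add hA0 zero_le_one]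
      have hkap : kapE TA φ i j ≤ 1 := by
        rw [kapE, if_neg (show ¬(i ∉ TA ∧ φ i = j) by tauto), zero_add]
        split <;> simp
      calc min (ocE TA cA cB i + ocE TA cA cB j) (wE TA A i + wE TA A j)
            + ENNReal.ofReal (cA + cB - A - 1) * kapE TA φ i j
          ≤ ENNReal.ofReal (A + 1) + ENNReal.ofReal (cA + cB - A - 1) * 1 :=
            add_le_add (hw ▸ min_le_right _ _) (mul_le_mul_right hkap _)
        _ = ENNReal.ofReal (cA + cB) := by
            rw [mul_one, ← ENNReal.ofReal_add (by linarith) hd0]; ring_nf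
        _ = ocE TA cA cB i + ocE TA cA cB j := hoc.symm
    · have hoc : ocE TA cA cB i + ocE TA cA cB j = ENNReal.ofReal (cA + cB) := by
        rw [ocE, ocE, if_neg hi, if_pos hj, ← ENNReal.ofReal_add hcB0 hcA0]; ring_nf
      have hw : wE TA A i + wE TA A j = ENNReal.ofReal (A + 1) := by
        rw [wE, wE, if_neg hi, if_pos hj, ← ENNReal.ofReal_one,
          ← ENNReal.ofReal_add zero_le_one hA0]; ring_nf
      have hkap : kapE TA φ i j ≤ 1 := by
        rw [kapE, if_neg (show ¬(j ∉ TA ∧ φ j = i) by tauto), add_zero]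
        split <;> simp
      calc min (ocE TA cA cB i + ocE TA cA cB j) (wE TA A i + wE TA A j)
            + ENNReal.ofReal (cA + cB - A - 1) * kapE TA φ i j
          ≤ ENNReal.ofReal (A + 1) + ENNReal.ofReal (cA + cB - A - 1) * 1 :=
            add_le_add (hw ▸ min_le_right _ _) (mul_le_mul_right hkap _)
        _ = ENNReal.ofReal (cA + cB) := by
            rw [mul_one, ← ENNReal.ofReal_add (by linarith) hd0]; ring_nf
        _ = ocE TA cA cB i + ocE TA cA cB j := hoc.symm
    · have hoc : ocE TA cA cB i + ocE TA cA cB j = ENNReal.ofReal (cB + cB) := by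
        rw [ocE, ocE, if_neg hi, if_neg hj, ← ENNReal.ofReal_add hcB0 hcB0]
      have hw : wE TA A i + wE TA A j = ENNReal.ofReal 2 := by
        rw [wE, wE, if_neg hi, if_neg hj]; norm_num
      have hkap : kapE TA φ i j ≤ 2 := by
        rw [kapE, show (2:ℝ≥0∞) = 1 + 1 by norm_num]
        exact add_le_add (by split <;> simp) (by split <;> simp)
      calc min (ocE TA cA cB i + ocE TA cA cB j) (wE TA A i + wE TA A j)
            + ENNReal.ofReal (cA + cB - A - 1) * kapE TA φ i j
          ≤ ENNReal.ofReal 2 + ENNReal.ofReal (cA + cB - A - 1) * 2 :=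
            add_le_add (hw ▸ min_le_right _ _) (mul_le_mul_right hkap _)
        _ = ENNReal.ofReal (2 + (cA + cB - A - 1) * 2) := by
            rw [ENNReal.ofReal_add (by norm_num) (by linarith),
              ENNReal.ofReal_mul hd0]
            norm_num
        _ ≤ ENNReal.ofReal (cB + cB) := ENNReal.ofReal_le_ofReal (by linarith)
        _ = ocE TA cA cB i + ocE TA cA cB j := hoc.symm
  · have hkap : kapE TA φ i j = 0 := by
      rw [kapE, if_neg, if_neg, add_zero]
      · rintro ⟨hj', hfj⟩
        exact hadj ((hfj ▸ hφ j hj').symm)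
      · rintro ⟨hi', hfi⟩
        exact hadj (hfi ▸ hφ i hi')
    rw [hkap, mul_zero, add_zero, FE, FE, if_neg hadj,
      if_neg (fun h => hadj h.symm), zero_add, zero_add, dE_comm G j i,
      show wE TA A j * dE G i j + wE TA A i * dE G i j
        = (wE TA A i + wE TA A j) * dE G i j by ring]
    calc LB TA A cA cB i j ≤ (wE TA A i + wE TA A j) + (wE TA A i + wE TA A j) :=
          add_le_add_right (min_le_right _ _) _
      _ = (wE TA A i + wE TA A j) * 2 := by ring
      _ ≤ (wE TA A i + wE TA A j) * dE G i j :=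
          mul_le_mul_right (two_le_dE G hij hadj) _

end Pair

section PairUpper

variable {TA : Finset V} {A cA cB : ℝ} {jstar : V}
  (hA : 1 < A) (hcA : 1 < cA) (hAB : cA ≤ cB) (hcAA : cA < A)
  (hkey : A + 1 ≤ cA + cB) (hjstar : jstar ∈ TA)

include hA hcA hAB hcAA hkey hjstar

lemma pair_upper_mixed {i j : V} (hi : i ∈ TA) (hj : j ∉ TA) (hij : i ≠ j) :
    FE TA A cA cB (Gstar TA jstar) i j + FE TA A cA cB (Gstar TA jstar) j i
      ≤ LB TA A cA cB i j
        + ENNReal.ofReal (cA + cB - A - 1) * kapE TA (fun _ => jstar) i j := by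
  have hA0 : (0:ℝ) ≤ A := by linarith
  have hcA0 : (0:ℝ) ≤ cA := by linarith
  have hcB0 : (0:ℝ) ≤ cB := by linarith
  have hd0 : (0:ℝ) ≤ cA + cB - A - 1 := by linarith
  have hoc : ocE TA cA cB i + ocE TA cA cB j = ENNReal.ofReal (cA + cB) := by
    rw [ocE, ocE, if_pos hi, if_neg hj, ← ENNReal.ofReal_add hcA0 hcB0]
  have hw : wE TA A i + wE TA A j = ENNReal.ofReal (A + 1) := by
    rw [wE, wE, if_pos hi, if_neg hj, ← ENNReal.ofReal_one,
      ← ENNReal.ofReal_add hA0 zero_le_one]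
  have hmin : min (ocE TA cA cB i + ocE TA cA cB j) (wE TA A i + wE TA A j)
      = ENNReal.ofReal (A + 1) := by
    rw [hoc, hw]
    exact min_eq_right (ENNReal.ofReal_le_ofReal hkey)
  by_cases hjs : i = jstar
  · have hadj : (Gstar TA jstar).Adj i j := by rw [hjs]; exact Gstar_adj_jB hjstar hj
    have hkap : kapE TA (fun _ => jstar) i j = 1 := by
      rw [kapE, if_neg (show ¬(i ∉ TA ∧ jstar = j) from fun hh => hh.1 hi),
        if_pos (show j ∉ TA ∧ jstar = i from ⟨hj, hjs.symm⟩), zero_add]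
    rw [FE, FE, if_pos hadj, if_pos hadj.symm, dE_adj hadj, dE_adj hadj.symm,
      mul_one, mul_one, LB, hmin, hkap, mul_one,
      show ocE TA cA cB i + wE TA A j + (ocE TA cA cB j + wE TA A i)
        = (wE TA A i + wE TA A j) + (ocE TA cA cB i + ocE TA cA cB j) by ring,
      hoc, hw, add_assoc, ← ENNReal.ofReal_add (by linarith) hd0]
    apply le_of_eq
    ring_nf
  · have hnadj : ¬ (Gstar TA jstar).Adj i j := Gstar_nadj_mixed hi hjs hj
    have hkap : kapE TA (fun _ => jstar) i j = 0 := by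
      rw [kapE, if_neg (show ¬(i ∉ TA ∧ jstar = j) from fun hh => hh.1 hi),
        if_neg (show ¬(j ∉ TA ∧ jstar = i) from fun hh => hjs hh.2.symm), add_zero]
    have hd2 : dE (Gstar TA jstar) i j ≤ 2 := Gstar_dE_le_two hjstar i j
    rw [FE, FE, if_neg hnadj, if_neg (fun h => hnadj h.symm), zero_add, zero_add,
      dE_comm _ j i,
      show wE TA A j * dE (Gstar TA jstar) i j + wE TA A i * dE (Gstar TA jstar) i j
        = (wE TA A i + wE TA A j) * dE (Gstar TA jstar) i j by ring,
      hkap, mul_zero, add_zero, LB, hmin]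
    calc (wE TA A i + wE TA A j) * dE (Gstar TA jstar) i j
        ≤ (wE TA A i + wE TA A j) * 2 := mul_le_mul_right hd2 _
      _ = (wE TA A i + wE TA A j) + (wE TA A i + wE TA A j) := by ring
      _ = wE TA A i + wE TA A j + ENNReal.ofReal (A + 1) := by rw [hw]

lemma pair_upper {i j : V} (hij : i ≠ j) :
    FE TA A cA cB (Gstar TA jstar) i j + FE TA A cA cB (Gstar TA jstar) j i
      ≤ LB TA A cA cB i j
        + ENNReal.ofReal (cA + cB - A - 1) * kapE TA (fun _ => jstar) i j := by
  have hA0 : (0:ℝ) ≤ A := by linarith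
  have hcA0 : (0:ℝ) ≤ cA := by linarith
  have hcB0 : (0:ℝ) ≤ cB := by linarith
  by_cases hi : i ∈ TA <;> by_cases hj : j ∈ TA
  · -- both in TA
    have hadj : (Gstar TA jstar).Adj i j := Gstar_adj_AA hi hj hij
    have hoc : ocE TA cA cB i = ENNReal.ofReal cA := by rw [ocE, if_pos hi]
    have hoc' : ocE TA cA cB j = ENNReal.ofReal cA := by rw [ocE, if_pos hj]
    have hmin : min (ocE TA cA cB i + ocE TA cA cB j) (wE TA A i + wE TA A j)
        = ocE TA cA cB i + ocE TA cA cB j := by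
      apply min_eq_left
      rw [hoc, hoc', wE, wE, if_pos hi, if_pos hj]
      exact add_le_add (ENNReal.ofReal_le_ofReal hcAA.le)
        (ENNReal.ofReal_le_ofReal hcAA.le)
    rw [FE, FE, if_pos hadj, if_pos hadj.symm, dE_adj hadj, dE_adj hadj.symm,
      mul_one, mul_one, LB, hmin]
    exact le_add_right (le_of_eq (by ring))
  · exact pair_upper_mixed hA hcA hAB hcAA hkey hjstar hi hj hij
  · rw [add_comm (FE TA A cA cB (Gstar TA jstar) i j), LB_comm, kapE_comm]
    exact pair_upper_mixed hA hcA hAB hcAA hkey hjstar hj hi hij.symm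
  · -- both outside TA
    have hnadj : ¬ (Gstar TA jstar).Adj i j := Gstar_nadj_BB hjstar hi hj
    have hkap : kapE TA (fun _ => jstar) i j = 0 := by
      rw [kapE, if_neg (show ¬(i ∉ TA ∧ jstar = j) from fun hh => hj (hh.2 ▸ hjstar)),
        if_neg (show ¬(j ∉ TA ∧ jstar = i) from fun hh => hi (hh.2 ▸ hjstar)), add_zero]
    have hw : wE TA A i + wE TA A j = 1 + 1 := by
      rw [wE, wE, if_neg hi, if_neg hj]
    have hmin : min (ocE TA cA cB i + ocE TA cA cB j) (wE TA A i + wE TA A j)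
        = wE TA A i + wE TA A j := by
      apply min_eq_right
      rw [hw, ocE, ocE, if_neg hi, if_neg hj]
      exact add_le_add (ENNReal.one_le_ofReal.mpr (by linarith))
        (ENNReal.one_le_ofReal.mpr (by linarith))
    have hd2 : dE (Gstar TA jstar) i j ≤ 2 := Gstar_dE_le_two hjstar i j
    rw [FE, FE, if_neg hnadj, if_neg (fun h => hnadj h.symm), zero_add, zero_add,
      dE_comm _ j i,
      show wE TA A j * dE (Gstar TA jstar) i j + wE TA A i * dE (Gstar TA jstar) i j
        = (wE TA A i + wE TA A j) * dE (Gstar TA jstar) i j by ring,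
      hkap, mul_zero, add_zero, LB, hmin]
    calc (wE TA A i + wE TA A j) * dE (Gstar TA jstar) i j
        ≤ (wE TA A i + wE TA A j) * 2 := mul_le_mul_right hd2 _
      _ = (wE TA A i + wE TA A j) + (wE TA A i + wE TA A j) := by ring

end PairUpper

section Part1

variable {TA : Finset V} {A cA cB : ℝ} {jstar : V}
  (hA : 1 < A) (hcA : 1 < cA) (hAB : cA ≤ cB) (hcAA : cA < A)
  (hkey : A + 1 ≤ cA + cB) (hjstar : jstar ∈ TA)

include hA hcA hAB hcAA hkey hjstar

lemma part1 (G : SimpleGraph V) (hG : G.Connected) :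
    socialCost TA A cA cB (Gstar TA jstar) ≤ socialCost TA A cA cB G := by
  classical
  have hφex : ∀ b, b ∉ TA → ∃ a, G.Adj b a := by
    intro b hb
    have hbne : b ≠ jstar := fun h => hb (h ▸ hjstar)
    obtain ⟨w⟩ := hG.preconnected b jstar
    cases w with
    | nil => exact absurd rfl hbne
    | cons h p => exact ⟨_, h⟩
  set φ : V → V := fun b => if h : ∃ a, G.Adj b a then h.choose else b with hφdef
  have hφ : ∀ b ∉ TA, G.Adj b (φ b) := by
    intro b hb
    have h := hφex b hb
    simp only [hφdef, dif_pos h]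
    exact h.choose_spec
  have hφ' : ∀ b ∉ TA, φ b ≠ b := fun b hb => (hφ b hb).ne'
  have hφ'' : ∀ b ∉ TA, (fun _ : V => jstar) b ≠ b := fun b hb h => hb (h ▸ hjstar)
  have key : (2:ℝ≥0∞) * socialCost TA A cA cB (Gstar TA jstar)
      ≤ 2 * socialCost TA A cA cB G := by
    rw [social_eq_offDiag, social_eq_offDiag,
      ← sum_offDiag_pair (FE TA A cA cB (Gstar TA jstar)),
      ← sum_offDiag_pair (FE TA A cA cB G)]
    calc ∑ p ∈ Finset.univ.offDiag,
          (FE TA A cA cB (Gstar TA jstar) p.1 p.2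
            + FE TA A cA cB (Gstar TA jstar) p.2 p.1)
        ≤ ∑ p ∈ Finset.univ.offDiag, (LB TA A cA cB p.1 p.2
            + ENNReal.ofReal (cA + cB - A - 1)
              * kapE TA (fun _ => jstar) p.1 p.2) := by
          apply Finset.sum_le_sum
          intro p hp
          exact pair_upper hA hcA hAB hcAA hkey hjstar
            (Finset.mem_offDiag.mp hp).2.2
      _ = ∑ p ∈ Finset.univ.offDiag, LB TA A cA cB p.1 p.2
            + ENNReal.ofReal (cA + cB - A - 1)
              * ∑ p ∈ Finset.univ.offDiag, kapE TA (fun _ => jstar) p.1 p.2 := by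
          rw [Finset.sum_add_distrib, Finset.mul_sum]
      _ = ∑ p ∈ Finset.univ.offDiag, LB TA A cA cB p.1 p.2
            + ENNReal.ofReal (cA + cB - A - 1)
              * ∑ p ∈ Finset.univ.offDiag, kapE TA φ p.1 p.2 := by
          rw [sum_offDiag_kap TA _ hφ'', sum_offDiag_kap TA φ hφ']
      _ = ∑ p ∈ Finset.univ.offDiag, (LB TA A cA cB p.1 p.2
            + ENNReal.ofReal (cA + cB - A - 1) * kapE TA φ p.1 p.2) := by
          rw [Finset.sum_add_distrib, Finset.mul_sum]
      _ ≤ ∑ p ∈ Finset.univ.offDiag,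
            (FE TA A cA cB G p.1 p.2 + FE TA A cA cB G p.2 p.1) := by
          apply Finset.sum_le_sum
          intro p hp
          exact pair_lower hA hcA hAB hcAA hkey G φ hφ
            (Finset.mem_offDiag.mp hp).2.2
  exact (ENNReal.mul_le_mul_iff_right (by norm_num) (by norm_num)).mp key

end Part1

lemma delE_comm (G : SimpleGraph V) (i j : V) : delE G i j = delE G j i := by
  rw [delE, delE, Sym2.eq_swap]

lemma addE_comm (G : SimpleGraph V) (i j : V) : addE G i j = addE G j i := by
  simp only [addE, SimpleGraph.edge, Sym2.eq_swap]

lemma unreachable_of_no_adj (G : SimpleGraph V) {b x : V} (h : ∀ y, ¬ G.Adj b y)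
    (hne : b ≠ x) : ¬ G.Reachable b x := by
  intro hr
  obtain ⟨w⟩ := hr
  cases w with
  | nil => exact hne rfl
  | cons ha _ => exact h _ ha

section CostLemmas

variable {TA : Finset V} {A cA cB : ℝ}

lemma cost_top_of_unreachable_A {G : SimpleGraph V} {i v : V} (h : ¬ G.Reachable i v)
    (hv : v ∈ TA) (hA0 : 0 < A) : cost TA A cA cB G i = ⊤ := by
  rw [cost, ENNReal.sum_eq_top.mpr ⟨v, hv, dE_top h⟩,
    ENNReal.mul_top (ENNReal.ofReal_pos.mpr hA0).ne']
  simp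

lemma cost_top_of_unreachable_B {G : SimpleGraph V} {i v : V} (h : ¬ G.Reachable i v)
    (hv : v ∉ TA) : cost TA A cA cB G i = ⊤ := by
  rw [cost, ENNReal.sum_eq_top.mpr ⟨v, Finset.mem_compl.mpr hv, dE_top h⟩]
  simp

lemma cost_del_lt (hA0 : 0 < A) (G : SimpleGraph V) {i j : V} (hadj : G.Adj i j)
    (hfin : cost TA A cA cB G i ≠ ⊤) (hj : j ∈ TA)
    (hlt : (if i ∈ TA then cA else cB) < A) :
    cost TA A cA cB G i < cost TA A cA cB (delE G i j) i := by
  set G' := delE G i j with hG'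
  have hsub : G' ≤ G := SimpleGraph.deleteEdges_le _
  have hne : i ≠ j := hadj.ne
  have hnadj : ¬ G'.Adj i j := by
    rw [hG', delE, SimpleGraph.deleteEdges_adj]
    rintro ⟨-, h⟩
    exact h (Set.mem_singleton _)
  have hdeg : degE G i = degE G' i + 1 := by
    have hns : G'.neighborSet i = G.neighborSet i \ {j} := by
      ext x
      simp only [hG', delE, SimpleGraph.deleteEdges_adj, SimpleGraph.mem_neighborSet,
        Set.mem_diff, Set.mem_singleton_iff, Sym2.congr_right]
    rw [degE, degE, hns]
    exact (Set.ncard_diff_singleton_add_one hadj (Set.toFinite _)).symm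
  set OC := ENNReal.ofReal (if i ∈ TA then cA else cB) with hOC
  set OA := ENNReal.ofReal A with hOA
  have hsum1 : ∑ x ∈ TA, dE G i x + 1 ≤ ∑ x ∈ TA, dE G' i x := by
    rw [← Finset.add_sum_erase TA _ hj, ← Finset.add_sum_erase TA _ hj]
    have h2 : dE G i j + 1 ≤ dE G' i j := by
      rw [dE_adj hadj]
      calc (1:ℝ≥0∞) + 1 = 2 := one_add_one_eq_two
        _ ≤ dE G' i j := two_le_dE G' hne hnadj
    calc dE G i j + ∑ x ∈ TA.erase j, dE G i x + 1
        = (dE G i j + 1) + ∑ x ∈ TA.erase j, dE G i x := by ring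
      _ ≤ dE G' i j + ∑ x ∈ TA.erase j, dE G' i x :=
          add_le_add h2 (Finset.sum_le_sum fun x _ => dE_anti hsub i x)
  have hsum2 : ∑ x ∈ TAᶜ, dE G i x ≤ ∑ x ∈ TAᶜ, dE G' i x :=
    Finset.sum_le_sum fun x _ => dE_anti hsub i x
  have main : cost TA A cA cB G i + OA ≤ cost TA A cA cB G' i + OC := by
    rw [cost, cost, ← hOC, ← hOA, hdeg]
    push_cast
    calc ((degE G' i : ℝ≥0∞) + 1) * OC + OA * ∑ x ∈ TA, dE G i x
          + ∑ x ∈ TAᶜ, dE G i x + OA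
        = ((degE G' i : ℝ≥0∞) * OC + OA * (∑ x ∈ TA, dE G i x + 1)
            + ∑ x ∈ TAᶜ, dE G i x) + OC := by ring
      _ ≤ ((degE G' i : ℝ≥0∞) * OC + OA * ∑ x ∈ TA, dE G' i x
            + ∑ x ∈ TAᶜ, dE G' i x) + OC := by
          apply add_le_add_left
          apply add_le_add (add_le_add_right (mul_le_mul_right hsum1 _) _) hsum2
  have hOClt : OC < OA := by
    rw [hOC, hOA]
    exact (ENNReal.ofReal_lt_ofReal_iff hA0).mpr hlt
  have : cost TA A cA cB G i + OC < cost TA A cA cB G' i + OC :=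
    lt_of_lt_of_le (ENNReal.add_lt_add_left hfin hOClt) main
  exact (ENNReal.add_lt_add_iff_right ENNReal.ofReal_ne_top).mp this

lemma cost_add_lt (G : SimpleGraph V) {i j : V} (hne : i ≠ j) (hnadj : ¬ G.Adj i j)
    (hfin : cost TA A cA cB G i ≠ ⊤) (hone : 1 < (if i ∈ TA then cA else cB))
    (hj : j ∉ TA) (hbound : ∀ x, dE G i x ≤ 2) :
    cost TA A cA cB G i < cost TA A cA cB (addE G i j) i := by
  set G'' := addE G i j with hG''
  have hadj'' : G''.Adj i j := by
    rw [hG'', addE]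
    exact Or.inr ((edge_adj i j i j).mpr ⟨Or.inl ⟨rfl, rfl⟩, hne⟩)
  have hd : ∀ x, x ≠ j → dE G i x ≤ dE G'' i x := by
    intro x hx
    by_cases hxi : x = i
    · subst hxi
      rw [dE_self, dE_self]
    · by_cases haix : G.Adj i x
      · rw [dE_adj haix]
        exact one_le_dE G'' (fun h => hxi h.symm)
      · have hnadj'' : ¬ G''.Adj i x := by
          intro h
          rcases (by rwa [hG'', addE, SimpleGraph.sup_adj] at h :
              G.Adj i x ∨ (edge i j).Adj i x) with h | h
          · exact haix h
          · rcases (edge_adj i j i x).mp h with ⟨⟨-, h2⟩ | ⟨h1, -⟩, -⟩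
            · exact hx h2
            · exact hne h1
        exact le_trans (hbound x) (two_le_dE G'' (fun h => hxi h.symm) hnadj'')
  have hdeg : degE G'' i = degE G i + 1 := by
    have hns : G''.neighborSet i = insert j (G.neighborSet i) := by
      ext x
      simp only [hG'', addE, SimpleGraph.mem_neighborSet, SimpleGraph.sup_adj,
        Set.mem_insert_iff, edge_adj]
      constructor
      · rintro (h | ⟨⟨-, h2⟩ | ⟨h1, -⟩, -⟩)
        · exact Or.inr h
        · exact Or.inl h2
        · exact absurd h1 hne
      · rintro (rfl | h)
        · exact Or.inr ⟨Or.inl ⟨trivial, rfl⟩, hne⟩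
        · exact Or.inl h
    have hjn : j ∉ G.neighborSet i := fun h => hnadj h
    rw [degE, degE, hns, Set.ncard_insert_of_notMem hjn (Set.toFinite _)]
  set OC := ENNReal.ofReal (if i ∈ TA then cA else cB) with hOC
  set OA := ENNReal.ofReal A with hOA
  have hsum1 : ∑ x ∈ TA, dE G i x ≤ ∑ x ∈ TA, dE G'' i x :=
    Finset.sum_le_sum fun x hx => hd x (fun h => hj (h ▸ hx))
  have hjc : j ∈ TAᶜ := Finset.mem_compl.mpr hj
  have hsum2 : ∑ x ∈ TAᶜ, dE G i x ≤ ∑ x ∈ TAᶜ, dE G'' i x + 1 := by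
    rw [← Finset.add_sum_erase TAᶜ _ hjc, ← Finset.add_sum_erase TAᶜ _ hjc]
    have h2 : dE G i j ≤ dE G'' i j + 1 := by
      calc dE G i j ≤ 2 := hbound j
        _ = 1 + 1 := (one_add_one_eq_two).symm
        _ ≤ dE G'' i j + 1 := add_le_add_left (one_le_dE G'' hne) 1
    calc dE G i j + ∑ x ∈ TAᶜ.erase j, dE G i x
        ≤ (dE G'' i j + 1) + ∑ x ∈ TAᶜ.erase j, dE G'' i x :=
          add_le_add h2 (Finset.sum_le_sum fun x hx =>
            hd x (Finset.ne_of_mem_erase hx))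
      _ = dE G'' i j + ∑ x ∈ TAᶜ.erase j, dE G'' i x + 1 := by ring
  have main : cost TA A cA cB G i + OC ≤ cost TA A cA cB G'' i + 1 := by
    rw [cost, cost, ← hOC, hdeg]
    push_cast
    calc (degE G i : ℝ≥0∞) * OC + ENNReal.ofReal A * ∑ x ∈ TA, dE G i x
          + ∑ x ∈ TAᶜ, dE G i x + OC
        = ((degE G i : ℝ≥0∞) + 1) * OC + ENNReal.ofReal A * ∑ x ∈ TA, dE G i x
            + ∑ x ∈ TAᶜ, dE G i x := by ring
      _ ≤ ((degE G i : ℝ≥0∞) + 1) * OC + ENNReal.ofReal A * ∑ x ∈ TA, dE G'' i x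
            + (∑ x ∈ TAᶜ, dE G'' i x + 1) := by
          apply add_le_add (add_le_add_right (mul_le_mul_right hsum1 _) _) hsum2
      _ = ((degE G i : ℝ≥0∞) + 1) * OC + ENNReal.ofReal A * ∑ x ∈ TA, dE G'' i x
            + ∑ x ∈ TAᶜ, dE G'' i x + 1 := by ring
  have hOCgt : (1:ℝ≥0∞) < OC := by
    rw [hOC, ← ENNReal.ofReal_one]
    exact (ENNReal.ofReal_lt_ofReal_iff (by linarith)).mpr hone
  have : cost TA A cA cB G i + 1 < cost TA A cA cB G'' i + 1 :=
    lt_of_lt_of_le (ENNReal.add_lt_add_left hfin hOCgt) main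
  exact (ENNReal.add_lt_add_iff_right ENNReal.one_ne_top).mp this

end CostLemmas

section Part2

variable {TA : Finset V} {A cA cB : ℝ} {jstar : V}
  (hA : 1 < A) (hcA : 1 < cA) (hAB : cA ≤ cB) (hcAA : cA < A)
  (hjstar : jstar ∈ TA)

include hjstar

lemma cost_Gstar_ne_top (i : V) : cost TA A cA cB (Gstar TA jstar) i ≠ ⊤ := by
  have hs : ∀ s : Finset V, ∑ j ∈ s, dE (Gstar TA jstar) i j ≠ ⊤ := by
    intro s h
    obtain ⟨a, -, ha⟩ := ENNReal.sum_eq_top.mp h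
    exact Gstar_dE_ne_top hjstar i a ha
  rw [cost]
  exact ENNReal.add_ne_top.mpr ⟨ENNReal.add_ne_top.mpr
    ⟨ENNReal.mul_ne_top (ENNReal.natCast_ne_top _) ENNReal.ofReal_ne_top,
     ENNReal.mul_ne_top ENNReal.ofReal_ne_top (hs TA)⟩, hs TAᶜ⟩

include hA hcA hAB hcAA

lemma part2 : PairwiseStable TA A cA cB (Gstar TA jstar) := by
  have hA0 : (0:ℝ) < A := by linarith
  constructor
  · intro i j hadj
    rcases (Gstar_adj_iff i j).mp hadj with ⟨hne, ⟨hi, hj⟩ | ⟨hi, hj⟩ | ⟨hj', hi'⟩⟩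
    · constructor
      · exact cost_del_lt hA0 _ hadj (cost_Gstar_ne_top hjstar i) hj
          (by rw [if_pos hi]; exact hcAA)
      · rw [delE_comm]
        exact cost_del_lt hA0 _ hadj.symm (cost_Gstar_ne_top hjstar j) hi
          (by rw [if_pos hj]; exact hcAA)
    · rw [hj]
      rw [hj] at hadj hne
      have hiso : ∀ y, ¬ (delE (Gstar TA jstar) i jstar).Adj i y := by
        intro y hy
        rw [delE, SimpleGraph.deleteEdges_adj] at hy
        obtain ⟨h1, h2⟩ := hy
        have hy' := Gstar_adj_B hjstar hi h1
        subst hy'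
        exact h2 rfl
      have hbne : i ≠ jstar := fun h => hi (h ▸ hjstar)
      have hur : ¬ (delE (Gstar TA jstar) i jstar).Reachable i jstar :=
        unreachable_of_no_adj _ hiso hbne
      constructor
      · rw [cost_top_of_unreachable_A hur hjstar hA0]
        exact (cost_Gstar_ne_top hjstar i).lt_top
      · rw [cost_top_of_unreachable_B (fun hr => hur hr.symm) hi]
        exact (cost_Gstar_ne_top hjstar jstar).lt_top
    · rw [hi']
      rw [hi'] at hadj hne
      have hiso : ∀ y, ¬ (delE (Gstar TA jstar) jstar j).Adj j y := by
        intro y hy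
        rw [delE, SimpleGraph.deleteEdges_adj] at hy
        obtain ⟨h1, h2⟩ := hy
        have hy' := Gstar_adj_B hjstar hj' h1
        subst hy'
        exact h2 (by rw [Sym2.eq_swap]; rfl)
      have hbne : j ≠ jstar := fun h => hj' (h ▸ hjstar)
      have hur : ¬ (delE (Gstar TA jstar) jstar j).Reachable j jstar :=
        unreachable_of_no_adj _ hiso hbne
      constructor
      · rw [cost_top_of_unreachable_B (fun hr => (hur hr.symm)) hj']
        exact (cost_Gstar_ne_top hjstar jstar).lt_top
      · rw [cost_top_of_unreachable_A hur hjstar hA0]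
        exact (cost_Gstar_ne_top hjstar j).lt_top
  · intro i j hne hnadj
    by_cases hi : i ∈ TA <;> by_cases hj : j ∈ TA
    · exact absurd (Gstar_adj_AA hi hj hne) hnadj
    · left
      exact cost_add_lt _ hne hnadj (cost_Gstar_ne_top hjstar i)
        (by rw [if_pos hi]; exact hcA) hj (Gstar_dE_le_two hjstar i)
    · right
      rw [addE_comm]
      exact cost_add_lt _ hne.symm (fun h => hnadj h.symm)
        (cost_Gstar_ne_top hjstar j) (by rw [if_pos hj]; exact hcA) hi
        (Gstar_dE_le_two hjstar j)
    · left
      exact cost_add_lt _ hne hnadj (cost_Gstar_ne_top hjstar i)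
        (by rw [if_neg hi]; linarith) hj (Gstar_dE_le_two hjstar i)

end Part2

lemma socialCost_top {TA : Finset V} {A cA cB : ℝ} (hA0 : 0 < A) (v0 : V)
    {G : SimpleGraph V} (hnc : ¬ G.Connected) : socialCost TA A cA cB G = ⊤ := by
  rw [SimpleGraph.connected_iff] at hnc
  have hnp : ¬ G.Preconnected := fun hp => hnc ⟨hp, ⟨v0⟩⟩
  rw [SimpleGraph.Preconnected] at hnp
  push_neg at hnp
  obtain ⟨u, v, huv⟩ := hnp
  have hcu : cost TA A cA cB G u = ⊤ := by
    by_cases hv : v ∈ TA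
    · exact cost_top_of_unreachable_A huv hv hA0
    · exact cost_top_of_unreachable_B huv hv
  rw [socialCost]
  exact ENNReal.sum_eq_top.mpr ⟨u, Finset.mem_univ u, hcu⟩


/-- Assuming `1 < c_A ≤ c_B`, `c_A < A` and `(A+1)/2 ≤ c`, the
star-over-clique graph `G*` minimizes the social cost among all connected graphs on `V`;
in particular, since `G*` is pairwise stable, the price of stability is `1`
(the minimal social cost over pairwise-stable graphs equals the minimal social cost over
connected graphs). -/
theorem stmt6 (TA : Finset V) (A cA cB c : ℝ)
    (hA : 1 < A) (hcA : 1 < cA) (hAB : cA ≤ cB) (hcAA : cA < A)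
    (hc : c = (cA + cB) / 2) (hceq : (A + 1) / 2 ≤ c)
    (jstar : V) (hjstar : jstar ∈ TA) :
    (∀ G : SimpleGraph V, G.Connected →
        socialCost TA A cA cB (Gstar TA jstar) ≤ socialCost TA A cA cB G) ∧
    PairwiseStable TA A cA cB (Gstar TA jstar) ∧
    sInf (socialCost TA A cA cB '' {G : SimpleGraph V | PairwiseStable TA A cA cB G}) =
      sInf (socialCost TA A cA cB '' {G : SimpleGraph V | G.Connected}) := by
  have hkey : A + 1 ≤ cA + cB := by rw [hc] at hceq; linarith
  have h1 : ∀ G : SimpleGraph V, G.Connected →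
      socialCost TA A cA cB (Gstar TA jstar) ≤ socialCost TA A cA cB G :=
    fun G hG => part1 hA hcA hAB hcAA hkey hjstar G hG
  have h2 : PairwiseStable TA A cA cB (Gstar TA jstar) :=
    part2 hA hcA hAB hcAA hjstar
  refine ⟨h1, h2, le_antisymm ?_ ?_⟩
  · refine le_trans (sInf_le ⟨Gstar TA jstar, h2, rfl⟩) (le_sInf ?_)
    rintro y ⟨G, hG, rfl⟩
    exact h1 G hG
  · apply le_sInf
    rintro y ⟨G, hG, rfl⟩
    by_cases hconn : G.Connected
    · exact sInf_le ⟨G, hconn, rfl⟩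
    · rw [socialCost_top (by linarith) jstar hconn]
      exact le_top

end
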